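/- arXiv:1905.12086 — 4 statements merged into one kernel-verified Lean document; each statement's English description precedes it below -/
import Mathlib

section
/- For an isolated stationary contact discontinuity (u_L = u_R = 0, p_L = p_R = p, arbitrary densities ρ_L ≠ ρ_R) for the Euler equations with ideal gas EOS, the Linde flux with β = 1 and symmetric wave speeds S_L = -c, S_R = c (c > 0) produces intermediate fluxes F*_L = F*_R = F_L = F_R = (0, p, 0); hence the discontinuity is exactly preserved. -/
/-- Linde solver with β = 1 exactly preserves a stationary contact discontinuity of
the Euler equations with ideal gas EOS: all fluxes equal (0, p, 0). -/
theorem linde_preserves_stationary_contact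
    (γ p c ρL ρR SL SR SM ωL ωR : ℝ)
    (UL UR FL FR UHLL ULs URs FLs FRs : Fin 3 → ℝ)
    (hγ : 1 < γ) (hc : 0 < c) (hρL : 0 < ρL) (hρR : 0 < ρR) (hne : ρL ≠ ρR)
    -- conservative states, with u = 0 and ρe = p/(γ-1)
    (hUL : UL = ![ρL, ρL * 0, p / (γ - 1) + ρL * 0 ^ 2 / 2])
    (hUR : UR = ![ρR, ρR * 0, p / (γ - 1) + ρR * 0 ^ 2 / 2])
    -- fluxes F = (ρu, ρu² + p, (ρE + p)u) with u = 0
    (hFL : FL = ![ρL * 0, ρL * 0 ^ 2 + p, (p / (γ - 1) + ρL * 0 ^ 2 / 2 + p) * 0])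
    (hFR : FR = ![ρR * 0, ρR * 0 ^ 2 + p, (p / (γ - 1) + ρR * 0 ^ 2 / 2 + p) * 0])
    (hSL : SL = -c) (hSR : SR = c)
    (hUHLL : UHLL = (SL - SR)⁻¹ • (FR - FL + SL • UL - SR • UR))
    (hSM : SM = (p - p + ρL * 0 * (SL - 0) - ρR * 0 * (SR - 0)) /
      (ρL * (SL - 0) - ρR * (SR - 0)))
    (hωR : ωR = (SR - SM) / (SR - SL)) (hωL : ωL = (SM - SL) / (SR - SL))
    (hULs : ULs = UHLL - ωR • (UR - UL))
    (hURs : URs = UHLL + ωL • (UR - UL))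
    (hFLs : FLs = FL + SL • (ULs - UL))
    (hFRs : FRs = FR + SR • (URs - UR)) :
    FLs = ![0, p, 0] ∧ FRs = ![0, p, 0] ∧ FL = ![0, p, 0] ∧ FR = ![0, p, 0] := by
  have hc' : c ≠ 0 := ne_of_gt hc
  have hSM0 : SM = 0 := by
    rw [hSM]; simp
  subst hSM0 hSL hSR hωL hωR hUHLL hULs hURs hFLs hFRs hUL hUR hFL hFR
  have hγ' : (-1 : ℝ) + γ ≠ 0 := by linarith
  refine ⟨?_, ?_, ?_, ?_⟩ <;> funext i <;> fin_cases i <;>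
    simp [Pi.smul_apply, smul_eq_mul]
  all_goals clear hSM
  all_goals right
  all_goals have h2 : -SR - SR ≠ 0 := by intro h; apply hc'; linarith
  all_goals have h3 : γ - 1 ≠ 0 := by linarith
  all_goals field_simp
  all_goals ring
end

section
/- In the RSIR reconstruction for the Euler equations with ideal gas EOS, if the initial data is an isolated contact discontinuity (u_L = u_R = u, p_L = p_R = p, ρ_L ≠ ρ_R) then ψ = β(ρ_R - ρ_L + (p_L - p_R)/c̄²) reduces to β(ρ_R - ρ_L), and with β = 1 the reconstructed jump vector ψ·(1, S_M, S_M²/2) with S_M = u equals the exact jump (ρ_R - ρ_L)(1, u, u²/2) of the conservative variables across the contact when temperatures adjust so that internal energies ρ_L e_L = ρ_R e_R. -/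
/-- RSIR reconstruction is exact on an isolated contact discontinuity of the Euler
equations with ideal gas EOS. -/
theorem rsir_exact_on_contact (γ ρL ρR u p cbar2 β eL eR : ℝ)
    (hγ : 1 < γ) (hρL : 0 < ρL) (hρR : 0 < ρR) (hc : 0 < cbar2) (hβ : β = 1)
    (heL : p = (γ - 1) * ρL * eL) (heR : p = (γ - 1) * ρR * eR)
    (he : ρL * eL = ρR * eR) :
    let ψ := β * (ρR - ρL + (p - p) / cbar2)
    ψ = β * (ρR - ρL) ∧
    (![ρR, ρR * u, ρR * (eR + u ^ 2 / 2)] - ![ρL, ρL * u, ρL * (eL + u ^ 2 / 2)]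
      : Fin 3 → ℝ) = ψ • ![1, u, u ^ 2 / 2] := by
  intro ψ
  have hψ : ψ = β * (ρR - ρL) := by simp [ψ]
  refine ⟨hψ, ?_⟩
  funext i
  fin_cases i <;>
    simp [hψ, hβ, Matrix.cons_val_zero, Matrix.cons_val_one] <;> nlinarith [he]
end

section
/- For the two-phase RSIR contact speed S_{M1} = U*_{HLL}((αρu)₁)/U*_{HLL}((αρ)₁): if phase 1 has uniform velocity u₁L = u₁R = u in the initial data, i.e., (αρu)₁K = (αρ)₁K·u for K = L, R, and the flux components satisfy Φ((αρ)₁) = (αρ)₁u and Φ((αρu)₁) = (αρ)₁u² + α₁(p₁ - p_I) with p₁L = p₁R = p_I, then S_{M1} = u, provided U*_{HLL}((αρ)₁) ≠ 0. -/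
/-- The two-phase RSIR contact speed S_M1 equals the common phase-1 velocity u when
the dispersed phase has uniform velocity and pressure p₁ = p_I. -/
theorem two_phase_contact_speed (α1L α1R ρ1L ρ1R p1L p1R pI u SL SR : ℝ)
    (hS : SL ≠ SR) (hpL : p1L = pI) (hpR : p1R = pI) :
    let aL := α1L * ρ1L
    let aR := α1R * ρ1R
    let mL := aL * u
    let mR := aR * u
    let ΦaL := aL * u
    let ΦaR := aR * u
    let ΦmL := aL * u ^ 2 + α1L * (p1L - pI)
    let ΦmR := aR * u ^ 2 + α1R * (p1R - pI)
    let Da := (ΦaR - ΦaL + SL * aL - SR * aR) / (SL - SR)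
    let Dm := (ΦmR - ΦmL + SL * mL - SR * mR) / (SL - SR)
    Da ≠ 0 → Dm / Da = u := by
  intro aL aR mL mR ΦaL ΦaR ΦmL ΦmR Da Dm hDa
  have hDm : Dm = Da * u := by
    simp only [Dm, Da, ΦmL, ΦmR, mL, mR, ΦaL, ΦaR, hpL, hpR]
    ring
  rw [hDm, mul_comm, mul_div_assoc, div_self hDa, mul_one]
end

section
/- For the stiffened gas EOS p = (γ-1)ρe - γp_∞ (γ > 1, p_∞ ≥ 0), the momentum interface condition (αρ)*₂R S_{M2}(S_{M2} - S_{M1}) + α*₂R(p*₂R - p_I) = (αρ)*₂L S_{M2}(S_{M2} - S_{M1}) + α*₂L(p*₂L - p_I) implies the total energy jump (αρE)*₂R - (αρE)*₂L = [(αρ)*₂R - (αρ)*₂L][S²_{M2}/2 - S_{M2}(S_{M2} - S_{M1})/(γ-1)] + (α*₂R - α*₂L)(p_I + γp_∞)/(γ-1), where E = e + S²_{M2}/2 on both sides (both states move at speed S_{M2}). -/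
/-- For the stiffened gas EOS, the phase-2 momentum interface condition implies the
total energy jump relation across the contact wave. -/
theorem phase2_energy_jump (γ pinf pI SM1 SM2 : ℝ) (hγ : 1 < γ) (hpinf : 0 ≤ pinf)
    (αR αL aR aL pRs pLs eR eL ER EL : ℝ)
    -- (αρe)*₂K = α*₂K (p*₂K + γ p_∞)/(γ-1)  (stiffened gas)
    (heR : eR = αR * (pRs + γ * pinf) / (γ - 1))
    (heL : eL = αL * (pLs + γ * pinf) / (γ - 1))
    -- total energies: both states move at speed S_M2
    (hER : ER = eR + aR * SM2 ^ 2 / 2) (hEL : EL = eL + aL * SM2 ^ 2 / 2)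
    -- momentum interface condition
    (hmom : aR * SM2 * (SM2 - SM1) + αR * (pRs - pI)
          = aL * SM2 * (SM2 - SM1) + αL * (pLs - pI)) :
    ER - EL = (aR - aL) * (SM2 ^ 2 / 2 - SM2 * (SM2 - SM1) / (γ - 1))
      + (αR - αL) * (pI + γ * pinf) / (γ - 1) := by
  have h : γ - 1 ≠ 0 := by linarith
  subst heR heL hER hEL
  field_simp
  ring_nf
  nlinarith [hmom, sq_nonneg SM2]
end
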